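/- For all x = (x₁, x₂) with x₁ > 0, x₂ > 0: (i) A₁(x) = −νρ·W₀(x) + (1−β)·W₁(x); (ii) A₂(x) = −ν√(1−ρ²)·W₀(x); (iii) the Stratonovich drift satisfies −(1/2)·( (DA₁)(x)[A₁(x)] + (DA₂)(x)[A₂(x)] ) = (1/2)ν²·W₀(x) + (1/2)(β−1)νρ·W₁(x) + (1/2)β(β−1)·W₂(x), where (DA_i)(x) denotes the Fréchet derivative of A_i at x. In particular the SABR vector fields V₀ = −(1/2)(DA₁·A₁ + DA₂·A₂), V₁ = A₁, V₂ = A₂ lie in the span of {W₀, W₁, W₂}. -/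

import Mathlib

/-- The SABR basis vector fields as `ℝ²`-valued maps:
`W_n(x) = ((1/(1-β)) x₁^{1-n(1-β)} x₂ⁿ, 0)` for `n ≥ 1` and `W₀(x) = (0, -x₂)`. -/
noncomputable def sabrWvec (β : ℝ) (n : ℕ) (x : ℝ × ℝ) : ℝ × ℝ :=
  if n = 0 then (0, -x.2)
  else ((1 / (1 - β)) * x.1 ^ (1 - (n : ℝ) * (1 - β)) * x.2 ^ n, 0)

/-- The SABR diffusion vector field `A₁(x) = (x₂ x₁^β, νρ x₂)`. -/
noncomputable def sabrA1 (β ν ρ : ℝ) (x : ℝ × ℝ) : ℝ × ℝ :=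
  (x.2 * x.1 ^ β, ν * ρ * x.2)

/-- The SABR diffusion vector field `A₂(x) = (0, ν√(1-ρ²) x₂)`. -/
noncomputable def sabrA2 (ν ρ : ℝ) (x : ℝ × ℝ) : ℝ × ℝ :=
  (0, ν * Real.sqrt (1 - ρ ^ 2) * x.2)

/-- On the open positive quadrant, the SABR vector fields `V₁ = A₁`, `V₂ = A₂` and the
Stratonovich-corrected drift `V₀ = -(1/2)(DA₁·A₁ + DA₂·A₂)` lie in the span of
`{W₀, W₁, W₂}`, with the explicit expressions
`A₁ = -νρ W₀ + (1-β) W₁`, `A₂ = -ν√(1-ρ²) W₀`, and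
`V₀ = (1/2)ν² W₀ + (1/2)(β-1)νρ W₁ + (1/2)β(β-1) W₂`. -/
theorem sabr_vector_fields_span (β ν ρ : ℝ) (hβ₁ : 1 / 2 < β) (hβ₂ : β < 1)
    (hρ₁ : -1 < ρ) (hρ₂ : ρ < 1) (x : ℝ × ℝ) (hx₁ : 0 < x.1) (hx₂ : 0 < x.2) :
    sabrA1 β ν ρ x = (-(ν * ρ)) • sabrWvec β 0 x + (1 - β) • sabrWvec β 1 x ∧
    sabrA2 ν ρ x = (-(ν * Real.sqrt (1 - ρ ^ 2))) • sabrWvec β 0 x ∧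
    -((1 : ℝ) / 2) • (fderiv ℝ (sabrA1 β ν ρ) x (sabrA1 β ν ρ x)
        + fderiv ℝ (sabrA2 ν ρ) x (sabrA2 ν ρ x))
      = ((1 / 2) * ν ^ 2) • sabrWvec β 0 x
        + ((1 / 2) * (β - 1) * ν * ρ) • sabrWvec β 1 x
        + ((1 / 2) * β * (β - 1)) • sabrWvec β 2 x := by
  have hβ : (1 : ℝ) - β ≠ 0 := by linarith
  have he1 : (1 : ℝ) - (1 : ℕ) * (1 - β) = β := by push_cast; ring
  have he2 : (1 : ℝ) - (2 : ℕ) * (1 - β) = β - 1 + β := by push_cast; ring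
  have hd1 : HasFDerivAt (sabrA1 β ν ρ)
      ((((x.2 : ℝ) • ((β * x.1 ^ (β - 1)) • (ContinuousLinearMap.fst ℝ ℝ ℝ))
          + (x.1 ^ β) • (ContinuousLinearMap.snd ℝ ℝ ℝ))).prod
        ((ν * ρ) • ContinuousLinearMap.snd ℝ ℝ ℝ)) x := by
    have h1 : HasFDerivAt (fun p : ℝ × ℝ => p.1 ^ β)
        ((β * x.1 ^ (β - 1)) • (ContinuousLinearMap.fst ℝ ℝ ℝ)) x :=
      (hasFDerivAt_fst).rpow_const (Or.inl hx₁.ne')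
    exact HasFDerivAt.prodMk ((hasFDerivAt_snd.mul h1)) ((hasFDerivAt_snd).const_mul (ν * ρ))
  have hd2 : HasFDerivAt (sabrA2 ν ρ)
      ((0 : ℝ × ℝ →L[ℝ] ℝ).prod
        ((ν * Real.sqrt (1 - ρ ^ 2)) • ContinuousLinearMap.snd ℝ ℝ ℝ)) x :=
    HasFDerivAt.prodMk (hasFDerivAt_const (0 : ℝ) x)
      ((hasFDerivAt_snd).const_mul (ν * Real.sqrt (1 - ρ ^ 2)))
  have hs : Real.sqrt (1 - ρ * ρ) * Real.sqrt (1 - ρ * ρ) = 1 - ρ * ρ :=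
    Real.mul_self_sqrt (by nlinarith)
  refine ⟨?_, ?_, ?_⟩
  · simp only [sabrA1, sabrWvec, if_true, Prod.mk.injEq, if_neg one_ne_zero, he1, Prod.smul_mk,
      Prod.mk_add_mk, pow_one, smul_eq_mul]
    refine ⟨by field_simp; ring, by ring⟩
  · simp only [sabrA2, sabrWvec, if_true, Prod.mk.injEq, Prod.smul_mk, smul_eq_mul]
    constructor <;> ring
  · rw [hd1.fderiv, hd2.fderiv]
    simp only [sabrA1, sabrA2, sabrWvec, if_true, Prod.mk.injEq, if_neg one_ne_zero,
      if_neg (two_ne_zero), he1, he2, ContinuousLinearMap.prod_apply,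
      ContinuousLinearMap.add_apply, ContinuousLinearMap.coe_smul',
      ContinuousLinearMap.coe_fst', ContinuousLinearMap.coe_snd', Pi.smul_apply,
      ContinuousLinearMap.zero_apply, smul_eq_mul, Prod.smul_mk, Prod.mk_add_mk,
      pow_one, pow_two]
    have hr : x.1 ^ (β - 1 + β) = x.1 ^ (β - 1) * x.1 ^ β := Real.rpow_add hx₁ _ _
    constructor
    · rw [hr]; field_simp; ring
    · linear_combination (-(1/2) * ν * ν * x.2) * hs
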